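/- Let E = (E⁰, E¹, d, r) be a directed graph. For finite paths μ, ν and finite sets F ⊆ r⁻¹(d(μ)), G ⊆ r⁻¹(d(ν)), the basic set Z({ν}) ∩ (⋃_{f∈G} Z({νf}))ᶜ is contained in Z({μ}) ∩ (⋃_{e∈F} Z({μe}))ᶜ if and only if either ν = μ and F ⊆ G, or |ν| > |μ|, μ is a prefix of ν, and ν_{|μ|+1} ∉ F. -/

import Mathlib

/-- A finite path in a directed graph with vertex set `V`, edge set `E`, domain
map `d` and range map `r`: a chained list of edges `μ₁…μₙ` (with
`d μᵢ = r μ_{i+1}`) together with its terminal vertex `vert = d μ`; a vertex is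
the path with no edges. -/
structure FinPath (V E : Type*) (d r : E → V) where
  vert : V
  edges : List E
  chain : edges.Chain' (fun a b => d a = r b)
  compat : ∀ h : edges ≠ [], d (edges.getLast h) = vert

/-- An infinite path: a chained infinite sequence of edges. -/
structure InfPath (V E : Type*) (d r : E → V) where
  seq : ℕ → E
  chain : ∀ i : ℕ, d (seq i) = r (seq (i + 1))

/-- The space of all finite and infinite paths of a directed graph. -/
def GPath (V E : Type*) (d r : E → V) : Type _ :=
  FinPath V E d r ⊕ InfPath V E d r

/-- `HasRawPrefix d r p es v` says that the path `p` has the finite path with edge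
list `es` and terminal vertex `v` as a prefix. -/
def HasRawPrefix {V E : Type*} (d r : E → V) (p : GPath V E d r)
    (es : List E) (v : V) : Prop :=
  Sum.elim
    (fun ξ : FinPath V E d r =>
      es <+: ξ.edges ∧
      (∀ h : es.length < ξ.edges.length, v = r (ξ.edges.get ⟨es.length, h⟩)) ∧
      (es.length = ξ.edges.length → v = ξ.vert))
    (fun g : InfPath V E d r =>
      (∀ (i : ℕ) (h : i < es.length), es.get ⟨i, h⟩ = g.seq i) ∧ v = r (g.seq es.length))
    p

/-- The cylinder set `Z({μ})` of all paths with prefix `μ`. -/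
def ZP {V E : Type*} (d r : E → V) (μ : FinPath V E d r) : Set (GPath V E d r) :=
  {p | HasRawPrefix d r p μ.edges μ.vert}

/-- The cylinder set `Z({μe})` of all paths with prefix the extension of `μ` by
the edge `e`. -/
def ZPe {V E : Type*} (d r : E → V) (μ : FinPath V E d r) (e : E) :
    Set (GPath V E d r) :=
  {p | HasRawPrefix d r p (μ.edges ++ [e]) (d e)}

/-- The basic set `Z({μ}) ∩ (⋃_{e ∈ F} Z({μe}))ᶜ`. -/
def ZB {V E : Type*} (d r : E → V) (μ : FinPath V E d r) (F : Set E) :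
    Set (GPath V E d r) :=
  ZP d r μ ∩ (⋃ e ∈ F, ZPe d r μ e)ᶜ

private lemma FinPath.ext' {V E : Type*} {d r : E → V} {μ ν : FinPath V E d r}
    (h1 : μ.vert = ν.vert) (h2 : μ.edges = ν.edges) : μ = ν := by
  cases μ; cases ν; simp_all

/-- containment of basic sets
`Z({ν}) ∩ (⋃_{f∈G} Z({νf}))ᶜ ⊆ Z({μ}) ∩ (⋃_{e∈F} Z({μe}))ᶜ` holds iff either
`ν = μ` and `F ⊆ G`, or `|ν| > |μ|`, `μ` is a prefix of `ν` and `ν_{|μ|+1} ∉ F`. -/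
theorem stmt_13 {V E : Type*} (d r : E → V) (μ ν : FinPath V E d r)
    (F G : Set E) (hF : F.Finite) (hG : G.Finite)
    (hFr : ∀ e ∈ F, r e = μ.vert) (hGr : ∀ e ∈ G, r e = ν.vert) :
    ZB d r ν G ⊆ ZB d r μ F ↔
      (ν = μ ∧ F ⊆ G) ∨
      (μ.edges.length < ν.edges.length ∧
        HasRawPrefix d r (Sum.inl ν) μ.edges μ.vert ∧
        ∀ h : μ.edges.length < ν.edges.length,
          ν.edges.get ⟨μ.edges.length, h⟩ ∉ F) := by
  constructor
  · intro hsub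
    -- the path ν itself lies in ZB ν G
    have hν : (Sum.inl ν : GPath V E d r) ∈ ZB d r ν G := by
      constructor
      · exact ⟨List.prefix_refl _, fun h => absurd h (lt_irrefl _), fun _ => rfl⟩
      · intro hmem
        obtain ⟨f, hf, hpf⟩ := Set.mem_iUnion₂.mp hmem
        have h1 : ν.edges ++ [f] <+: ν.edges := hpf.1
        have := h1.length_le
        simp at this
    obtain ⟨⟨hpre, hvert, hverteq⟩, hnot⟩ := hsub hν
    have hlen : μ.edges.length ≤ ν.edges.length := hpre.length_le
    rcases eq_or_lt_of_le hlen with heq | hlt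
    · -- equal lengths: ν = μ and F ⊆ G
      left
      have hedges : μ.edges = ν.edges := hpre.eq_of_length heq
      have hverts : μ.vert = ν.vert := hverteq heq
      refine ⟨(FinPath.ext' hverts hedges).symm, ?_⟩
      intro e heF
      by_contra heG
      have hre : r e = ν.vert := by rw [hFr e heF, hverts]
      -- build the path ν extended by e
      have hchain : (ν.edges ++ [e]).Chain' (fun a b => d a = r b) := by
        show List.IsChain _ _
        rw [List.isChain_append]
        refine ⟨ν.chain, List.isChain_singleton _, ?_⟩
        intro x hx y hy
        simp only [List.head?_cons, Option.mem_some_iff] at hy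
        subst hy
        rcases eq_or_ne ν.edges [] with h0 | h0
        · rw [h0] at hx; simp at hx
        · rw [List.getLast?_eq_getLast h0, Option.mem_some_iff] at hx
          subst hx
          rw [ν.compat h0, hre]
      set q : FinPath V E d r := ⟨d e, ν.edges ++ [e], hchain, by
        intro h; rw [List.getLast_concat]⟩ with hq
      have hqedges : q.edges = ν.edges ++ [e] := rfl
      have hqmem : (Sum.inl q : GPath V E d r) ∈ ZB d r ν G := by
        constructor
        · refine ⟨⟨[e], rfl⟩, ?_, ?_⟩
          · intro h
            simp only [List.get_eq_getElem, hqedges]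
            rw [List.getElem_concat_length rfl, hre]
          · intro h; rw [hqedges] at h; simp at h
        · intro hmem
          obtain ⟨f, hfG, hpf⟩ := Set.mem_iUnion₂.mp hmem
          have h1 : ν.edges ++ [f] <+: q.edges := hpf.1
          have h2 : ν.edges ++ [f] = ν.edges ++ [e] :=
            h1.eq_of_length (by rw [hqedges]; simp)
          have : f = e := by simpa using h2
          exact heG (this ▸ hfG)
      obtain ⟨-, hqnot⟩ := hsub hqmem
      apply hqnot
      refine Set.mem_iUnion₂.mpr ?_
      refine ⟨e, heF, ?_, ?_, ?_⟩
      · rw [hqedges, hedges]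
      · intro h; rw [hqedges, hedges] at h; simp at h
      · intro _; rfl
    · -- strict: right disjunct
      right
      refine ⟨hlt, ⟨hpre, hvert, hverteq⟩, ?_⟩
      intro h he₀F
      apply hnot
      refine Set.mem_iUnion₂.mpr ?_
      refine ⟨ν.edges.get ⟨μ.edges.length, h⟩, he₀F, ?_, ?_, ?_⟩
      · -- μ.edges ++ [e₀] <+: ν.edges
        rw [List.prefix_iff_eq_take]
        have htk : μ.edges = List.take μ.edges.length ν.edges :=
          List.prefix_iff_eq_take.mp hpre
        simp only [List.length_append, List.length_singleton, List.get_eq_getElem]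
        rw [← List.take_concat_get h, List.concat_eq_append, ← htk]
      · -- vertex condition when there is a next edge
        intro h'
        simp only [List.length_append, List.length_singleton, List.get_eq_getElem,
          List.getElem_concat_length rfl] at h' ⊢
        have := List.isChain_iff_getElem.mp ν.chain μ.edges.length (by omega)
        simpa using this
      · -- vertex condition at the very end
        intro h'
        simp only [List.length_append, List.length_singleton, List.get_eq_getElem,
          List.getElem_concat_length rfl]
        have hne : ν.edges ≠ [] := by
          intro h0; rw [h0] at hlt; simp at hlt
        have hc := ν.compat hne
        rw [List.getLast_eq_getElem] at hc
        simp only [List.length_append, List.length_singleton] at h'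
        convert hc using 3
        omega
  · rintro (⟨rfl, hFG⟩ | ⟨hlt, ⟨hpre, hvert, -⟩, hnotF⟩)
    · -- ν = μ and F ⊆ G
      rintro p ⟨hp1, hp2⟩
      refine ⟨hp1, fun hmem => hp2 ?_⟩
      simp only [Set.mem_iUnion] at hmem ⊢
      obtain ⟨e, heF, hpe⟩ := hmem
      exact ⟨e, hFG heF, hpe⟩
    · -- μ a proper prefix of ν
      have he₀F : ν.edges.get ⟨μ.edges.length, hlt⟩ ∉ F := hnotF hlt
      have hμvert : μ.vert = r (ν.edges.get ⟨μ.edges.length, hlt⟩) := hvert hlt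
      rintro p ⟨hpν, hpG⟩
      constructor
      · -- p ∈ ZP μ
        rcases p with ξ | g
        · obtain ⟨hp1, hp2, hp3⟩ := hpν
          refine ⟨hpre.trans hp1, ?_, ?_⟩
          · intro h
            simp only [List.get_eq_getElem] at hμvert ⊢
            rw [← hp1.getElem hlt]
            exact hμvert
          · intro heq
            exfalso
            have := hp1.length_le
            omega
        · obtain ⟨hp1, hp2⟩ := hpν
          refine ⟨?_, ?_⟩
          · intro i hi
            simp only [List.get_eq_getElem] at hp1 ⊢
            rw [hpre.getElem hi]
            exact hp1 i (lt_of_lt_of_le hi hlt.le)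
          · rw [← hp1 μ.edges.length hlt]
            exact hμvert
      · -- p avoids all Z(μe), e ∈ F
        intro hmem
        simp only [Set.mem_iUnion] at hmem
        obtain ⟨e, heF, hpe⟩ := hmem
        apply he₀F
        have hee : e = ν.edges.get ⟨μ.edges.length, hlt⟩ := by
          rcases p with ξ | g
          · have h1 : μ.edges ++ [e] <+: ξ.edges := hpe.1
            have h2 : ν.edges <+: ξ.edges := hpν.1
            have hi : μ.edges.length < ξ.edges.length := by
              have := h1.length_le; simp at this; omega
            have e1 : (μ.edges ++ [e])[μ.edges.length]'(by simp) = ξ.edges[μ.edges.length] :=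
              h1.getElem (by simp)
            have e2 : ν.edges[μ.edges.length]'hlt = ξ.edges[μ.edges.length] :=
              h2.getElem hlt
            simp only [List.get_eq_getElem]
            rw [List.getElem_concat_length rfl] at e1
            rw [e1, ← e2]
          · have h1 := hpe.1 μ.edges.length (by simp)
            have h2 := hpν.1 μ.edges.length hlt
            simp only [List.get_eq_getElem] at h1 h2 ⊢
            rw [List.getElem_concat_length rfl] at h1
            rw [h1, ← h2]
        exact hee ▸ heF
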